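/- For every connected graph there exists a function f such that: if H is a connected graph and X ⊆ V(H) with |X| ≥ f(s), then either H contains a subdivision of the star K_{1,s} with all s leaves in X, or H contains an X-rooted path minor on s branch sets. -/

import Mathlib

open SimpleGraph

/-- `x` is a (reflexive) ancestor of `y` in the tree `T` rooted at `r`,
expressed metrically: `x` lies on the unique `r`–`y` path. -/
def AncIn {V : Type*} (T : SimpleGraph V) (r x y : V) : Prop :=
  T.dist r x + T.dist x y = T.dist r y

/-- A tree-layout of `G`: a rooted tree on the vertex set of `G` such that the endpoints
of every edge of `G` are in ancestor-descendant relation. -/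
structure TreeLayout {V : Type*} (G : SimpleGraph V) where
  tree : SimpleGraph V
  isTree : tree.IsTree
  root : V
  layout : ∀ ⦃x y : V⦄, G.Adj x y → AncIn tree root x y ∨ AncIn tree root y x

namespace TreeLayout

variable {V : Type*} {G : SimpleGraph V}

/-- `x` is an ancestor of `y` (reflexively) in the tree-layout. -/
def Anc (L : TreeLayout G) (x y : V) : Prop := AncIn L.tree L.root x y

def StrictAnc (L : TreeLayout G) (x y : V) : Prop := L.Anc x y ∧ x ≠ y

/-- The bandwidth of the tree-layout is at most `k`: neighbours in `G` are at
tree-distance at most `k`. -/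
def BandwidthLE (L : TreeLayout G) (k : ℕ) : Prop :=
  ∀ ⦃x y : V⦄, G.Adj x y → L.tree.dist x y ≤ k

/-- The interval `[a,b]` of the tree-layout: vertices on the tree path from `a` to `b`
(for `a` an ancestor of `b`). -/
def interval (L : TreeLayout G) (a b : V) : Set V := {z : V | L.Anc a z ∧ L.Anc z b}

end TreeLayout

/-- Treebandwidth: the minimum bandwidth over tree-layouts of `G`. -/
noncomputable def treebandwidth {V : Type*} (G : SimpleGraph V) : ℕ :=
  sInf {k | ∃ L : TreeLayout G, L.BandwidthLE k}

/-- Treedepth: the minimum depth (number of vertices on a root-to-leaf path) of a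
tree-layout (elimination tree) of `G`. -/
noncomputable def treedepth {V : Type*} (G : SimpleGraph V) : ℕ :=
  sInf {k | ∃ L : TreeLayout G, ∀ v : V, L.tree.dist L.root v + 1 ≤ k}

/-- A tree-partition of `G`: a partition of `V(G)` indexed by the nodes of a tree such that
every edge of `G` has both ends in one part or in parts indexed by adjacent nodes. -/
structure TreePartition {V : Type*} (G : SimpleGraph V) where
  ι : Type
  tree : SimpleGraph ι
  isTree : tree.IsTree
  part : V → ι
  adj : ∀ ⦃x y : V⦄, G.Adj x y → part x = part y ∨ tree.Adj (part x) (part y)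

/-- Tree-partition-width: minimum over tree-partitions of the maximum part size. -/
noncomputable def treePartitionWidth {V : Type*} (G : SimpleGraph V) : ℕ :=
  sInf {k | ∃ P : TreePartition G, ∀ i : P.ι, {v : V | P.part v = i}.ncard ≤ k}

/-- The connected component of `v` in the subgraph of `G` induced by `S`. -/
def connCompIn {V : Type*} (G : SimpleGraph V) (S : Set V) (v : V) : Set V :=
  {w : V | ∃ (hv : v ∈ S) (hw : w ∈ S), (G.induce S).Reachable ⟨v, hv⟩ ⟨w, hw⟩}

/-- `RootedTreedepthLE G U S n` expresses `td(G[S], U) ≤ n` for the rooted treedepth: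
it is `0` when `S` misses `U`, and otherwise one may delete one vertex from each
connected component and recurse. -/
inductive RootedTreedepthLE {V : Type*} (G : SimpleGraph V) (U : Set V) : Set V → ℕ → Prop
  | base (S : Set V) (n : ℕ) (h : S ∩ U = ∅) : RootedTreedepthLE G U S n
  | step (S : Set V) (n : ℕ) (pick : ∀ v : V, v ∈ S → V)
      (hpick : ∀ (v : V) (hv : v ∈ S), pick v hv ∈ connCompIn G S v)
      (h : ∀ (v : V) (hv : v ∈ S),
        RootedTreedepthLE G U (connCompIn G S v \ {pick v hv}) n) :
      RootedTreedepthLE G U S (n + 1)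

/-- A `U`-rooted minor model of the path on `k` vertices in `G`. -/
structure RootedPathMinor {V : Type*} (G : SimpleGraph V) (U : Set V) (k : ℕ) where
  branch : Fin k → Set V
  connected : ∀ i, (G.induce (branch i)).Connected
  disjoint : ∀ i j, i ≠ j → Disjoint (branch i) (branch j)
  rooted : ∀ i, (branch i ∩ U).Nonempty
  adj : ∀ i j : Fin k, (j : ℕ) = (i : ℕ) + 1 → ∃ a ∈ branch i, ∃ b ∈ branch j, G.Adj a b

/-- A subdivision of the `k`-fan in `G` with universal (center) vertex `v`:
branch vertices `b 0, …, b (k-1)` of the path, internally disjoint spokes from `v`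
and internally disjoint path segments between consecutive branch vertices. -/
structure FanSubdivision {V : Type*} (G : SimpleGraph V) (v : V) (k : ℕ) where
  b : Fin k → V
  binj : Function.Injective b
  bne : ∀ i, b i ≠ v
  spoke : ∀ i : Fin k, G.Walk v (b i)
  spokePath : ∀ i, (spoke i).IsPath
  seg : ∀ (i : Fin k) (h : (i : ℕ) + 1 < k), G.Walk (b i) (b ⟨(i : ℕ) + 1, h⟩)
  segPath : ∀ i h, (seg i h).IsPath
  vNotinSeg : ∀ i h, v ∉ (seg i h).support
  spokeDisj : ∀ i j, i ≠ j →
    {x | x ∈ (spoke i).support} ∩ {x | x ∈ (spoke j).support} = {v}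
  spokeSegDisj : ∀ i j h,
    {x | x ∈ (spoke i).support} ∩ {x | x ∈ (seg j h).support} ⊆
      ({b i} : Set V) ∩ {b j, b ⟨(j : ℕ) + 1, h⟩}
  segDisj : ∀ i j hi hj, i ≠ j →
    {x | x ∈ (seg i hi).support} ∩ {x | x ∈ (seg j hj).support} ⊆
      ({b i, b ⟨(i : ℕ) + 1, hi⟩} : Set V) ∩ {b j, b ⟨(j : ℕ) + 1, hj⟩}

/-- A `p`-centered colouring: every (nonempty) connected induced subgraph either receives
more than `p` colours or has a uniquely coloured vertex. -/
def IsPCenteredColoring {V : Type*} (G : SimpleGraph V) (p : ℕ) (c : V → ℕ) : Prop :=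
  ∀ S : Set V, S.Nonempty → (G.induce S).Connected →
    p < (c '' S).ncard ∨ ∃ x ∈ S, ∀ y ∈ S, c y = c x → y = x

/-- Treewidth, characterised via tree-layouts: the minimum over tree-layouts of the maximum
over nodes `u` of the number of strict ancestors of `u` that are `G`-neighbours of some
descendant of `u` (including `u`). -/
noncomputable def treewidthTL {V : Type*} (G : SimpleGraph V) : ℕ :=
  sInf {k | ∃ L : TreeLayout G, ∀ u : V,
    {a : V | L.StrictAnc a u ∧ ∃ d : V, L.Anc u d ∧ G.Adj a d}.ncard ≤ k}

/-- The pruned subtree of `x` in a tree-layout: descendants of `x` (including `x`) having a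
neighbour of `x` among their own descendants. -/
def prunedSubtree {V : Type*} {G : SimpleGraph V} (L : TreeLayout G) (x : V) : Set V :=
  {y : V | L.Anc x y ∧ ∃ d : V, L.Anc y d ∧ G.Adj x d}

/-- Treespan: the minimum over tree-layouts of (maximum size of a pruned subtree minus one). -/
noncomputable def treespan {V : Type*} (G : SimpleGraph V) : ℕ :=
  sInf {k | ∃ L : TreeLayout G, ∀ x : V, (prunedSubtree L x).ncard ≤ k + 1}

/-- A tree decomposition of `G`. -/
structure TreeDecomp {V : Type*} (G : SimpleGraph V) where
  ι : Type
  tree : SimpleGraph ι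
  isTree : tree.IsTree
  bag : ι → Set V
  coverV : ∀ v : V, ∃ t, v ∈ bag t
  coverE : ∀ ⦃x y : V⦄, G.Adj x y → ∃ t, x ∈ bag t ∧ y ∈ bag t
  subtree : ∀ v : V, (tree.induce {t : ι | v ∈ bag t}).Connected

/-- Domino treewidth: minimum width over tree decompositions in which every vertex
belongs to at most two bags. -/
noncomputable def dominoTreewidth {V : Type*} (G : SimpleGraph V) : ℕ :=
  sInf {k | ∃ D : TreeDecomp G, (∀ v : V, {t : D.ι | v ∈ D.bag t}.ncard ≤ 2) ∧
    ∀ t : D.ι, (D.bag t).ncard ≤ k + 1}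

/-- Edge-treewidth via tree-layouts: the minimum over tree-layouts of the maximum over nodes
`u` of the number of edges with one endpoint a descendant of `u` (including `u`) and the other
a strict ancestor of `u`. -/
noncomputable def edgeTreewidth {V : Type*} (G : SimpleGraph V) : ℕ :=
  sInf {k | ∃ L : TreeLayout G, ∀ u : V,
    {p : V × V | L.StrictAnc p.1 u ∧ L.Anc u p.2 ∧ G.Adj p.1 p.2}.ncard ≤ k}

/-- `S` is a block (2-connected component) of `G`: a maximal connected set of vertices whose
induced subgraph has no cutvertex. -/
def IsBlock {V : Type*} (G : SimpleGraph V) (S : Set V) : Prop :=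
  S.Nonempty ∧ (G.induce S).Connected ∧
    (∀ x ∈ S, (G.induce (S \ {x})).Preconnected) ∧
    ∀ S' : Set V, S ⊆ S' → (G.induce S').Connected →
      (∀ x ∈ S', (G.induce (S' \ {x})).Preconnected) → S' = S

/-- Biconnected maximum degree: the maximum over blocks of `G` of the maximum degree
inside the block. -/
noncomputable def biconnMaxDegree {V : Type*} (G : SimpleGraph V) : ℕ :=
  sSup {d | ∃ (S : Set V) (v : V), IsBlock G S ∧ v ∈ S ∧ d = {w ∈ S | G.Adj v w}.ncard}

/-- `G` is 3-connected: more than 3 vertices, and removing any two vertices leaves it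
connected. -/
def ThreeConnected {V : Type*} (G : SimpleGraph V) : Prop :=
  3 < Nat.card V ∧ ∀ x y : V, (G.induce {v : V | v ≠ x ∧ v ≠ y}).Connected

/-- `G` has `H` as a minor (branch-set model). -/
def HasMinor {V W : Type*} (G : SimpleGraph V) (H : SimpleGraph W) : Prop :=
  ∃ B : W → Set V, (∀ w, (G.induce (B w)).Connected) ∧
    (∀ w w', w ≠ w' → Disjoint (B w) (B w')) ∧
    ∀ ⦃w w'⦄, H.Adj w w' → ∃ a ∈ B w, ∃ b ∈ B w', G.Adj a b

/-- Planarity via Wagner's theorem: no `K₅` minor and no `K₃,₃` minor. -/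
def PlanarWagner {V : Type*} (G : SimpleGraph V) : Prop :=
  ¬ HasMinor G (completeGraph (Fin 5)) ∧
    ¬ HasMinor G (completeBipartiteGraph (Fin 3) (Fin 3))

/-- A subdivision of the `k`-wheel in `G` with hub `v`. -/
structure WheelSubdivision {V : Type*} (G : SimpleGraph V) (v : V) (k : ℕ) where
  b : Fin k → V
  binj : Function.Injective b
  bne : ∀ i, b i ≠ v
  spoke : ∀ i : Fin k, G.Walk v (b i)
  spokePath : ∀ i, (spoke i).IsPath
  seg : ∀ i : Fin k, G.Walk (b i) (b (finRotate k i))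
  segPath : ∀ i, (seg i).IsPath
  vNotinSeg : ∀ i, v ∉ (seg i).support
  spokeDisj : ∀ i j, i ≠ j →
    {x | x ∈ (spoke i).support} ∩ {x | x ∈ (spoke j).support} = {v}
  spokeSegDisj : ∀ i j,
    {x | x ∈ (spoke i).support} ∩ {x | x ∈ (seg j).support} ⊆
      ({b i} : Set V) ∩ {b j, b (finRotate k j)}
  segDisj : ∀ i j, i ≠ j →
    {x | x ∈ (seg i).support} ∩ {x | x ∈ (seg j).support} ⊆
      ({b i, b (finRotate k i)} : Set V) ∩ {b j, b (finRotate k j)}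

/-- A subdivision of the `k`-dipole with poles `u`, `v`: `k` internally vertex-disjoint
`u`–`v` paths of length at least `2`. -/
structure DipoleSubdivision {V : Type*} (G : SimpleGraph V) (u v : V) (k : ℕ) where
  path : Fin k → G.Walk u v
  isPath : ∀ i, (path i).IsPath
  len : ∀ i, 2 ≤ (path i).length
  disj : ∀ i j, i ≠ j →
    {x | x ∈ (path i).support} ∩ {x | x ∈ (path j).support} = ({u, v} : Set V)

/-- A separation of `G`. -/
def IsSeparation {V : Type*} (G : SimpleGraph V) (A B : Set V) : Prop :=
  A ∪ B = Set.univ ∧ ∀ a ∈ A \ B, ∀ b ∈ B \ A, ¬ G.Adj a b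

/-- `μ(X,Y)`: the minimum order of a separation `(A,B)` with `X ⊆ A` and `Y ⊆ B`. -/
noncomputable def muSep {V : Type*} (G : SimpleGraph V) (X Y : Set V) : ℕ :=
  sInf {n | ∃ A B : Set V, IsSeparation G A B ∧ X ⊆ A ∧ Y ⊆ B ∧ (A ∩ B).ncard = n}

def IsMaximalClique {V : Type*} (G : SimpleGraph V) (K : Set V) : Prop :=
  G.IsClique K ∧ ∀ K' : Set V, G.IsClique K' → K ⊆ K' → K' = K

/-- `G` is proper chordal: it has a tree-layout in which every maximal clique is an
interval of a root-to-leaf path. -/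
def ProperChordal {V : Type*} (G : SimpleGraph V) : Prop :=
  ∃ L : TreeLayout G, ∀ K : Set V, IsMaximalClique G K →
    ∃ a b : V, L.Anc a b ∧ K = L.interval a b

/-- A topological-minor model (subdivision embedding) of `H` in `G`. -/
structure TopMinorEmbedding {W V : Type*} (H : SimpleGraph W) (G : SimpleGraph V) where
  φ : W → V
  inj : Function.Injective φ
  path : ∀ ⦃a b : W⦄, H.Adj a b → G.Walk (φ a) (φ b)
  isPath : ∀ ⦃a b : W⦄ (h : H.Adj a b), (path h).IsPath
  branchOnPath : ∀ ⦃a b : W⦄ (h : H.Adj a b) (w : W),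
    φ w ∈ (path h).support → w = a ∨ w = b
  disj : ∀ ⦃a b c d : W⦄ (hab : H.Adj a b) (hcd : H.Adj c d), s(a, b) ≠ s(c, d) →
    {x | x ∈ (path hab).support} ∩ {x | x ∈ (path hcd).support} ⊆
      ({φ a, φ b} : Set V) ∩ {φ c, φ d}

/-- A subdivision of the star `K_{1,s}` in `H` with all leaves in `X`. -/
structure StarSubdivision {V : Type*} (H : SimpleGraph V) (X : Set V) (s : ℕ) where
  center : V
  leaf : Fin s → V
  leafInj : Function.Injective leaf
  leafX : ∀ i, leaf i ∈ X
  leafNe : ∀ i, leaf i ≠ center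
  path : ∀ i : Fin s, H.Walk center (leaf i)
  isPath : ∀ i, (path i).IsPath
  disj : ∀ i j, i ≠ j →
    {x | x ∈ (path i).support} ∩ {x | x ∈ (path j).support} = {center}

/-- The weight `w(t,U)` of a set `U` at a node `t` of a tree decomposition is at most `a`:
`|β(t) ∩ U|` plus the number of a suitable family of adhesions incident to `t` whose union
hits all paths from `β(t)` to `U ∖ β(t)` is at most `a`. -/
def WeightLE {V : Type*} {G : SimpleGraph V} (D : TreeDecomp G) (U : Set V) (t : D.ι)
    (a : ℕ) : Prop :=
  ∃ F : Set D.ι, (∀ s ∈ F, D.tree.Adj t s) ∧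
    (D.bag t ∩ U).ncard + F.ncard ≤ a ∧
    ∀ ⦃x y : V⦄ (p : G.Walk x y), x ∈ D.bag t → y ∈ U \ D.bag t →
      ∃ z ∈ p.support, ∃ s ∈ F, z ∈ D.bag t ∩ D.bag s

/-- The graph obtained from `G` by subdividing the edge `xy` into a path with `n + 1`
new internal vertices. -/
def subdivideEdge {V : Type*} (G : SimpleGraph V) (x y : V) (n : ℕ) :
    SimpleGraph (V ⊕ Fin (n + 1)) :=
  SimpleGraph.fromRel (fun a b =>
    (∃ u w : V, a = Sum.inl u ∧ b = Sum.inl w ∧ G.Adj u w ∧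
      ¬(u = x ∧ w = y) ∧ ¬(u = y ∧ w = x)) ∨
    (a = Sum.inl x ∧ b = Sum.inr 0) ∨
    (∃ i : Fin n, a = Sum.inr i.castSucc ∧ b = Sum.inr i.succ) ∨
    (a = Sum.inr (Fin.last n) ∧ b = Sum.inl y))

namespace StarAux

open SimpleGraph Walk

variable {W : Type} {H : SimpleGraph W}

lemma induce_adj' {B : Set W} {a b : B} (h : H.Adj a b) : (H.induce B).Adj a b := h

lemma walk_of_induce_walk {B : Set W} :
    ∀ {a b : B} (_ : (H.induce B).Walk a b), ∃ q : H.Walk a b, ∀ z ∈ q.support, z ∈ B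
  | a, _, Walk.nil => ⟨Walk.nil, by simp [a.2]⟩
  | a, b, Walk.cons h p => by
      obtain ⟨q, hq⟩ := walk_of_induce_walk p
      refine ⟨Walk.cons (by simpa using h) q, ?_⟩
      intro z hz
      rw [Walk.support_cons] at hz
      rcases List.mem_cons.mp hz with rfl | hz
      · exact a.2
      · exact hq z hz

lemma exists_walk_of_induce_reachable {B : Set W} {a b : W} (ha : a ∈ B) (hb : b ∈ B)
    (h : (H.induce B).Reachable ⟨a, ha⟩ ⟨b, hb⟩) :
    ∃ q : H.Walk a b, ∀ z ∈ q.support, z ∈ B := by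
  obtain ⟨p⟩ := h
  exact walk_of_induce_walk p

lemma induce_reachable_of_walk {B : Set W} :
    ∀ {a b : W} (q : H.Walk a b), (∀ z ∈ q.support, z ∈ B) →
      ∀ (ha : a ∈ B) (hb : b ∈ B), (H.induce B).Reachable ⟨a, ha⟩ ⟨b, hb⟩
  | _, _, Walk.nil, _, _, _ => Reachable.refl _
  | a, b, Walk.cons (v := c) h q, hs, ha, hb => by
      have hc : c ∈ B := hs c (by simp)
      have h1 : (H.induce B).Reachable ⟨a, ha⟩ ⟨c, hc⟩ := (induce_adj' h).reachable
      exact h1.trans (induce_reachable_of_walk q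
        (fun z hz => hs z (by simp [hz])) hc hb)

/-- Walk-based connectivity of a set. -/
def Conn (H : SimpleGraph W) (B : Set W) : Prop :=
  B.Nonempty ∧ ∀ a ∈ B, ∀ b ∈ B, ∃ q : H.Walk a b, ∀ z ∈ q.support, z ∈ B

lemma Conn.induce_connected {B : Set W} (h : Conn H B) : (H.induce B).Connected := by
  obtain ⟨⟨v0, hv0⟩, h2⟩ := h
  rw [connected_iff]
  refine ⟨?_, ⟨⟨v0, hv0⟩⟩⟩
  rintro ⟨x, hx⟩ ⟨y, hy⟩
  obtain ⟨q, hq⟩ := h2 x hx y hy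
  exact induce_reachable_of_walk q hq hx hy

lemma conn_of_induce_connected {B : Set W} (h : (H.induce B).Connected) : Conn H B := by
  obtain ⟨⟨v0, hv0⟩⟩ := h.nonempty
  refine ⟨⟨v0, hv0⟩, fun a ha b hb => ?_⟩
  exact exists_walk_of_induce_reachable ha hb (h.preconnected _ _)

lemma connCompIn_subset {T : Set W} {y : W} : connCompIn H T y ⊆ T :=
  fun _ h => h.2.1

lemma mem_connCompIn_self {T : Set W} {y : W} (hy : y ∈ T) : y ∈ connCompIn H T y :=
  ⟨hy, hy, Reachable.refl _⟩

lemma mem_connCompIn_of_walk {T : Set W} {y z : W} (hy : y ∈ T) (q : H.Walk y z)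
    (hq : ∀ u ∈ q.support, u ∈ T) : ∀ u ∈ q.support, u ∈ connCompIn H T y := by
  classical
  intro u hu
  have hqt := q.takeUntil u hu
  refine ⟨hy, hq u hu, ?_⟩
  exact induce_reachable_of_walk (q.takeUntil u hu)
    (fun z hz => hq z (q.support_takeUntil_subset hu hz)) hy (hq u hu)

lemma connCompIn_walks {T : Set W} {y : W} (hy : y ∈ T) :
    ∀ a ∈ connCompIn H T y, ∀ b ∈ connCompIn H T y,
      ∃ q : H.Walk a b, ∀ z ∈ q.support, z ∈ connCompIn H T y := by
  intro a ha b hb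
  obtain ⟨_, haT, hra⟩ := ha
  obtain ⟨_, hbT, hrb⟩ := hb
  obtain ⟨qa, hqa⟩ := exists_walk_of_induce_reachable hy haT hra
  obtain ⟨qb, hqb⟩ := exists_walk_of_induce_reachable hy hbT hrb
  refine ⟨qa.reverse.append qb, ?_⟩
  intro z hz
  rcases (Walk.mem_support_append_iff _ _).mp hz with hz | hz
  · rw [Walk.support_reverse] at hz
    exact mem_connCompIn_of_walk hy qa hqa z (List.mem_reverse.mp hz)
  · exact mem_connCompIn_of_walk hy qb hqb z hz

lemma connCompIn_eq_of_mem {T : Set W} {y z : W} (hz : z ∈ connCompIn H T y) :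
    connCompIn H T z = connCompIn H T y := by
  obtain ⟨hyT, hzT, hr⟩ := hz
  ext w
  constructor
  · rintro ⟨_, hwT, hr2⟩
    exact ⟨hyT, hwT, hr.trans hr2⟩
  · rintro ⟨_, hwT, hr2⟩
    exact ⟨hzT, hwT, hr.symm.trans hr2⟩

lemma connCompIn_disjoint {T : Set W} {y y' : W}
    (h : connCompIn H T y ≠ connCompIn H T y') :
    Disjoint (connCompIn H T y) (connCompIn H T y') := by
  rw [Set.disjoint_left]
  intro z hz hz'
  exact h ((connCompIn_eq_of_mem hz).symm.trans (connCompIn_eq_of_mem hz'))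

lemma exists_frontier {S Bs : Set W} :
    ∀ {a b : W} (q : H.Walk a b), (∀ z ∈ q.support, z ∈ S) → a ∉ Bs → b ∈ Bs →
      ∃ u ∈ Bs, ∃ w, H.Adj u w ∧ w ∈ connCompIn H (S \ Bs) a
  | a, _, Walk.nil, _, haB, hbB => absurd hbB haB
  | a, b, Walk.cons (v := c) h q, hs, haB, hbB => by
      have haS : a ∈ S := hs a (by simp)
      by_cases hc : c ∈ Bs
      · exact ⟨c, hc, a, h.symm, mem_connCompIn_self ⟨haS, haB⟩⟩
      · obtain ⟨u, hu, w, hw, hwc⟩ := exists_frontier q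
          (fun z hz => hs z (by simp [hz])) hc hbB
        refine ⟨u, hu, w, hw, ?_⟩
        have hcS : c ∈ S := hs c (by simp)
        have : c ∈ connCompIn H (S \ Bs) a :=
          ⟨⟨haS, haB⟩, ⟨hcS, hc⟩, (induce_adj' h).reachable⟩
        rw [← connCompIn_eq_of_mem this]
        exact hwc

lemma walk_support_walks {v x : W} (p : H.Walk v x) :
    ∀ a ∈ p.support, ∀ b ∈ p.support,
      ∃ q : H.Walk a b, ∀ z ∈ q.support, z ∈ p.support := by
  classical
  intro a ha b hb
  refine ⟨(p.takeUntil a ha).reverse.append (p.takeUntil b hb), ?_⟩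
  intro z hz
  rcases (Walk.mem_support_append_iff _ _).mp hz with hz | hz
  · rw [Walk.support_reverse] at hz
    exact p.support_takeUntil_subset ha (List.mem_reverse.mp hz)
  · exact p.support_takeUntil_subset hb hz

lemma conn_insert {v w : W} {C : Set W} (hw : w ∈ C) (hadj : H.Adj v w)
    (hconn : ∀ a ∈ C, ∀ b ∈ C, ∃ q : H.Walk a b, ∀ z ∈ q.support, z ∈ C) :
    (H.induce (insert v C)).Connected := by
  refine Conn.induce_connected ⟨⟨w, Set.mem_insert_of_mem _ hw⟩, ?_⟩
  have key : ∀ a ∈ insert v C, ∃ q : H.Walk a w, ∀ z ∈ q.support, z ∈ insert v C := by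
    intro a ha
    rcases Set.mem_insert_iff.mp ha with rfl | ha
    · exact ⟨Walk.cons hadj Walk.nil, by
        intro z hz
        rw [Walk.support_cons] at hz
        rcases List.mem_cons.mp hz with rfl | hz
        · exact Set.mem_insert _ _
        · simp only [Walk.support_nil, List.mem_singleton] at hz
          subst hz; exact Set.mem_insert_of_mem _ hw⟩
    · obtain ⟨q, hq⟩ := hconn a ha w hw
      exact ⟨q, fun z hz => Set.mem_insert_of_mem _ (hq z hz)⟩
  intro a ha b hb
  obtain ⟨qa, hqa⟩ := key a ha
  obtain ⟨qb, hqb⟩ := key b hb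
  refine ⟨qa.append qb.reverse, ?_⟩
  intro z hz
  rcases (Walk.mem_support_append_iff _ _).mp hz with hz | hz
  · exact hqa z hz
  · rw [Walk.support_reverse] at hz
    exact hqb z (List.mem_reverse.mp hz)

end StarAux
namespace StarAux

variable {W : Type} {H : SimpleGraph W} {X : Set W}

open SimpleGraph Walk

lemma star_builder {u : W} {s : ℕ} (C : Fin s → Set W)
    (hCinj : Function.Injective C)
    (hdisj : ∀ i j, i ≠ j → Disjoint (C i) (C j)) (hu : ∀ i, u ∉ C i)
    (hX : ∀ i, ∃ z ∈ C i, z ∈ X) (hadj : ∀ i, ∃ w ∈ C i, H.Adj u w)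
    (hconn : ∀ i, ∀ a ∈ C i, ∀ b ∈ C i, ∃ q : H.Walk a b, ∀ z ∈ q.support, z ∈ C i) :
    Nonempty (StarSubdivision H X s) := by
  classical
  choose x hxC hxX using hX
  choose w hwC hw using hadj
  have hwalk : ∀ i, ∃ q : H.Walk (w i) (x i), q.IsPath ∧ ∀ z ∈ q.support, z ∈ C i := by
    intro i
    obtain ⟨q, hq⟩ := hconn i (w i) (hwC i) (x i) (hxC i)
    exact ⟨q.bypass, q.bypass_isPath, fun z hz => hq z (q.support_bypass_subset hz)⟩
  choose q hqP hqC using hwalk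
  refine ⟨⟨u, x, ?_, hxX, ?_, fun i => Walk.cons (hw i) (q i), ?_, ?_⟩⟩
  · intro i j hij
    by_contra hne
    exact Set.disjoint_left.mp (hdisj i j hne) (hxC i) (hij ▸ hxC j)
  · intro i h
    exact hu i (h ▸ hxC i)
  · intro i
    rw [Walk.cons_isPath_iff]
    exact ⟨hqP i, fun h => hu i (hqC i u h)⟩
  · intro i j hij
    ext z
    simp only [Set.mem_inter_iff, Set.mem_setOf_eq, Set.mem_singleton_iff,
      Walk.support_cons, List.mem_cons]
    constructor
    · rintro ⟨h1, h2⟩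
      rcases h1 with rfl | hzi
      · rfl
      · rcases h2 with rfl | hzj
        · rfl
        · exact absurd (hqC j z hzj)
            (fun hj => Set.disjoint_left.mp (hdisj i j hij) (hqC i z hzi) hj)
    · rintro rfl
      exact ⟨Or.inl rfl, Or.inl rfl⟩

lemma star_of_finset {u : W} {s : ℕ} (CS : Finset (Set W)) (hcard : s ≤ CS.card)
    (h1 : ∀ C ∈ CS, ∃ z ∈ C, z ∈ X) (h2 : ∀ C ∈ CS, u ∉ C)
    (h3 : ∀ C ∈ CS, ∃ w ∈ C, H.Adj u w)
    (h4 : ∀ C ∈ CS, ∀ a ∈ C, ∀ b ∈ C, ∃ q : H.Walk a b, ∀ z ∈ q.support, z ∈ C)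
    (h5 : ∀ C ∈ CS, ∀ C' ∈ CS, C ≠ C' → Disjoint C C') :
    Nonempty (StarSubdivision H X s) := by
  classical
  obtain ⟨t, hts, htc⟩ := Finset.exists_subset_card_eq hcard
  let e : Fin s ≃ {A // A ∈ t} := (finCongr htc.symm).trans t.equivFin.symm
  let C : Fin s → Set W := fun i => (e i : Set W)
  have hmem : ∀ i, C i ∈ CS := fun i => hts (e i).2
  have hCinj : Function.Injective C := by
    intro i j h
    exact e.injective (Subtype.ext h)
  refine star_builder C hCinj ?_ (fun i => h2 _ (hmem i)) (fun i => h1 _ (hmem i))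
    (fun i => h3 _ (hmem i)) (fun i => h4 _ (hmem i))
  intro i j hij
  exact h5 _ (hmem i) _ (hmem j) (fun h => hij (hCinj h))

end StarAux
namespace StarAux

variable {W : Type} {H : SimpleGraph W} {X : Set W}

open SimpleGraph

def trivialMinor : RootedPathMinor H X 0 :=
  ⟨fun i => i.elim0, fun i => i.elim0, fun i => i.elim0, fun i => i.elim0, fun i => i.elim0⟩

lemma prepend {k : ℕ} (m : RootedPathMinor H X k) (B : Set W)
    (hconn : (H.induce B).Connected) (hBX : (B ∩ X).Nonempty)
    (hdisj : ∀ i, Disjoint B (m.branch i))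
    (hadj : ∀ hk : 0 < k, ∃ a ∈ B, ∃ b ∈ m.branch ⟨0, hk⟩, H.Adj a b) :
    ∃ m' : RootedPathMinor H X (k + 1),
      m'.branch 0 = B ∧ ∀ i : Fin k, m'.branch i.succ = m.branch i := by
  refine ⟨⟨Fin.cases B m.branch, ?_, ?_, ?_, ?_⟩, by simp, by simp⟩
  · intro i
    refine Fin.cases ?_ ?_ i
    · simpa using hconn
    · intro j; simpa using m.connected j
  · intro i j hij
    rcases Fin.eq_zero_or_eq_succ i with rfl | ⟨i', rfl⟩ <;>
      rcases Fin.eq_zero_or_eq_succ j with rfl | ⟨j', rfl⟩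
    · exact absurd rfl hij
    · simpa using hdisj j'
    · simpa using (hdisj i').symm
    · simp only [Fin.cases_succ]
      exact m.disjoint i' j' (fun h => hij (by rw [h]))
  · intro i
    refine Fin.cases ?_ ?_ i
    · simpa using hBX
    · intro j; simpa using m.rooted j
  · intro i j hij
    rcases Fin.eq_zero_or_eq_succ j with rfl | ⟨j', rfl⟩
    · simp at hij
    · rcases Fin.eq_zero_or_eq_succ i with rfl | ⟨i', rfl⟩
      · have hj' : (j' : ℕ) = 0 := by
          have := hij; simp [Fin.val_succ] at this; omega
        have hk : 0 < k := lt_of_le_of_lt (Nat.zero_le _) j'.2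
        obtain ⟨a, ha, b, hb, hab⟩ := hadj hk
        refine ⟨a, by simpa using ha, b, ?_, hab⟩
        have hj'' : j' = ⟨0, hk⟩ := Fin.ext hj'
        rw [hj'']
        simpa using hb
      · simp only [Fin.cases_succ]
        refine m.adj i' j' ?_
        have := hij
        simp [Fin.val_succ] at this
        omega

lemma grow0 {k : ℕ} (hk : 0 < k) (m : RootedPathMinor H X k) {v w : W}
    (hv : ∀ i, v ∉ m.branch i) (hw : w ∈ m.branch ⟨0, hk⟩) (hadj : H.Adj v w)
    (hconn : (H.induce (insert v (m.branch ⟨0, hk⟩))).Connected) :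
    ∃ m' : RootedPathMinor H X k,
      m'.branch ⟨0, hk⟩ = insert v (m.branch ⟨0, hk⟩) ∧
      ∀ i : Fin k, 0 < (i : ℕ) → m'.branch i = m.branch i := by
  classical
  set i0 : Fin k := ⟨0, hk⟩ with hi0
  refine ⟨⟨fun i => if (i : ℕ) = 0 then insert v (m.branch i0) else m.branch i,
    ?_, ?_, ?_, ?_⟩, by simp [hi0], ?_⟩
  · intro i
    by_cases h : (i : ℕ) = 0
    · rw [if_pos h]; exact hconn
    · rw [if_neg h]; exact m.connected i
  · intro i j hij
    by_cases hi : (i : ℕ) = 0 <;> by_cases hj : (j : ℕ) = 0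
    · exact absurd (Fin.ext (hi.trans hj.symm)) hij
    · rw [if_pos hi, if_neg hj, Set.disjoint_left]
      rintro z hz hzj
      rcases Set.mem_insert_iff.mp hz with rfl | hz
      · exact hv j hzj
      · exact Set.disjoint_left.mp
          (m.disjoint i0 j (fun h => hj (by rw [← h]))) hz hzj
    · rw [if_neg hi, if_pos hj, Set.disjoint_left]
      rintro z hz hzj
      rcases Set.mem_insert_iff.mp hzj with rfl | hzj'
      · exact hv i hz
      · exact Set.disjoint_left.mp
          (m.disjoint i i0 (fun h => hi (by rw [h]))) hz hzj'
    · rw [if_neg hi, if_neg hj]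
      exact m.disjoint i j hij
  · intro i
    by_cases h : (i : ℕ) = 0
    · rw [if_pos h]
      obtain ⟨z, hz⟩ := m.rooted i0
      exact ⟨z, Set.mem_insert_of_mem _ hz.1, hz.2⟩
    · rw [if_neg h]; exact m.rooted i
  · intro i j hij
    have hjne : (j : ℕ) ≠ 0 := by omega
    by_cases hi : (i : ℕ) = 0
    · rw [if_pos hi, if_neg hjne]
      have hii : i = i0 := Fin.ext hi
      obtain ⟨a, ha, b, hb, hab⟩ := m.adj i j hij
      exact ⟨a, Set.mem_insert_of_mem _ (hii ▸ ha), b, hb, hab⟩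
    · rw [if_neg hi, if_neg hjne]
      exact m.adj i j hij
  · intro i hi
    dsimp only
    rw [if_neg (show ¬(i : ℕ) = 0 by omega)]

end StarAux
namespace StarAux

variable {W : Type} {H : SimpleGraph W} {X : Set W}

open SimpleGraph Walk

lemma caterpillar (s : ℕ) {v x : W} (p : H.Walk v x) :
    p.IsPath → ∀ (j : ℕ) (CS : Finset (Set W)),
    (∀ C ∈ CS, (∃ z ∈ C, z ∈ X) ∧ (∀ z ∈ C, z ∉ p.support) ∧
      (∃ u ∈ p.support, ∃ w ∈ C, H.Adj u w) ∧
      (∀ a ∈ C, ∀ b ∈ C, ∃ q : H.Walk a b, ∀ z ∈ q.support, z ∈ C)) →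
    (∀ C ∈ CS, ∀ C' ∈ CS, C ≠ C' → Disjoint C C') →
    s * j ≤ CS.card →
    Nonempty (StarSubdivision H X s) ∨
      ∃ m : RootedPathMinor H X j,
        (∀ i, ∀ z ∈ m.branch i, z ∈ p.support ∨ ∃ C ∈ CS, z ∈ C) ∧
        ∀ h : 0 < j, v ∈ m.branch ⟨0, h⟩ := by
  classical
  induction p with
  | @nil v =>
    intro _ j CS hCS hdisj hcard
    match j with
    | 0 => exact Or.inr ⟨trivialMinor, fun i => i.elim0, fun h => absurd h (by omega)⟩
    | j + 1 =>
      refine Or.inl (star_of_finset CS ?_ (fun C hC => (hCS C hC).1)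
        (fun C hC hu => (hCS C hC).2.1 v hu (by simp)) ?_
        (fun C hC => (hCS C hC).2.2.2) hdisj)
      · calc s = s * 1 := (Nat.mul_one s).symm
          _ ≤ s * (j + 1) := Nat.mul_le_mul_left s (by omega)
          _ ≤ CS.card := hcard
      · intro C hC
        obtain ⟨u, hu, w, hw, hadj⟩ := (hCS C hC).2.2.1
        simp only [Walk.support_nil, List.mem_singleton] at hu
        subst hu
        exact ⟨w, hw, hadj⟩
  | @cons v c y hvc q ih =>
    intro hp j CS hCS hdisj hcard
    rw [Walk.cons_isPath_iff] at hp
    obtain ⟨hqpath, hvq⟩ := hp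
    set CSv := CS.filter (fun C => ∃ w ∈ C, H.Adj v w) with hCSv
    by_cases hbig : s ≤ CSv.card
    · refine Or.inl (star_of_finset CSv hbig
        (fun C hC => (hCS C (Finset.filter_subset _ _ hC)).1)
        (fun C hC hu => (hCS C (Finset.filter_subset _ _ hC)).2.1 v hu (by simp))
        (fun C hC => (Finset.mem_filter.mp hC).2)
        (fun C hC => (hCS C (Finset.filter_subset _ _ hC)).2.2.2)
        (fun C hC C' hC' => hdisj C (Finset.filter_subset _ _ hC) C'
          (Finset.filter_subset _ _ hC')))
    · push_neg at hbig
      match j with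
      | 0 => exact Or.inr ⟨trivialMinor, fun i => i.elim0, fun h => absurd h (by omega)⟩
      | j + 1 =>
        have hsupp_cons : (Walk.cons hvc q).support = v :: q.support := Walk.support_cons _ _
        -- conditions for comps not adjacent to v : they attach to q
        have hcond' : ∀ CS' : Finset (Set W), CS' ⊆ CS → (∀ C ∈ CS', C ∉ CSv) →
            ∀ C ∈ CS', (∃ z ∈ C, z ∈ X) ∧ (∀ z ∈ C, z ∉ q.support) ∧
              (∃ u ∈ q.support, ∃ w ∈ C, H.Adj u w) ∧
              (∀ a ∈ C, ∀ b ∈ C, ∃ r : H.Walk a b, ∀ z ∈ r.support, z ∈ C) := by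
          intro CS' hsub hnv C hC
          obtain ⟨h1, h2, h3, h4⟩ := hCS C (hsub hC)
          refine ⟨h1, fun z hz hz2 => h2 z hz (by rw [hsupp_cons]; exact List.mem_cons_of_mem _ hz2), ?_, h4⟩
          obtain ⟨u, hu, w, hw, hadj⟩ := h3
          rw [hsupp_cons] at hu
          rcases List.mem_cons.mp hu with rfl | hu
          · exact absurd (Finset.mem_filter.mpr ⟨hsub hC, w, hw, hadj⟩) (hnv C hC)
          · exact ⟨u, hu, w, hw, hadj⟩
        by_cases hne : CSv.Nonempty
        · -- cut here: branch with v and a component adjacent to v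
          obtain ⟨Cstar, hCstar⟩ := hne
          have hCstarCS : Cstar ∈ CS := Finset.filter_subset _ _ hCstar
          obtain ⟨wst, hwst, hadjst⟩ := (Finset.mem_filter.mp hCstar).2
          set CS' := CS \ CSv with hCS'
          have hsub : CS' ⊆ CS := Finset.sdiff_subset
          have hnv : ∀ C ∈ CS', C ∉ CSv := fun C hC => (Finset.mem_sdiff.mp hC).2
          have hcard' : s * j ≤ CS'.card := by
            have h1 : CS'.card = CS.card - CSv.card := by
              rw [hCS']
              exact Finset.card_sdiff_of_subset (by rw [hCSv]; exact Finset.filter_subset _ _)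
            have h2 : s * (j + 1) = s * j + s := Nat.mul_succ s j
            omega
          rcases ih hqpath j CS' (hcond' CS' hsub hnv)
            (fun C hC C' hC' => hdisj C (hsub hC) C' (hsub hC')) hcard' with hstar | ⟨m, hmsub, hm0⟩
          · exact Or.inl hstar
          · -- prepend insert v Cstar
            have hvnotC : ∀ C ∈ CS, v ∉ C := by
              intro C hC hvC
              exact (hCS C hC).2.1 v hvC (by rw [hsupp_cons]; exact List.mem_cons_self)
            have hdisjB : ∀ i, Disjoint (insert v Cstar) (m.branch i) := by
              intro i
              rw [Set.disjoint_left]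
              rintro z hz hzB
              rcases hmsub i z hzB with hzq | ⟨C, hC, hzC⟩
              · rcases Set.mem_insert_iff.mp hz with rfl | hz
                · exact hvq hzq
                · exact (hCS Cstar hCstarCS).2.1 z hz
                    (by rw [hsupp_cons]; exact List.mem_cons_of_mem _ hzq)
              · rcases Set.mem_insert_iff.mp hz with rfl | hz
                · exact hvnotC C (hsub hC) hzC
                · have hCne : Cstar ≠ C := by
                    intro h
                    exact (Finset.mem_sdiff.mp hC).2 (h ▸ hCstar)
                  exact Set.disjoint_left.mp
                    (hdisj Cstar hCstarCS C (hsub hC) hCne) hz hzC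
            obtain ⟨m', hm'0, hm's⟩ := prepend m (insert v Cstar)
              (conn_insert hwst hadjst (hCS Cstar hCstarCS).2.2.2)
              (by
                obtain ⟨z, hzC, hzX⟩ := (hCS Cstar hCstarCS).1
                exact ⟨z, Set.mem_insert_of_mem _ hzC, hzX⟩)
              hdisjB
              (fun hk => ⟨v, Set.mem_insert _ _, c, hm0 hk, hvc⟩)
            refine Or.inr ⟨m', ?_, ?_⟩
            · intro i z hz
              rcases Fin.eq_zero_or_eq_succ i with rfl | ⟨i', rfl⟩
              · rw [hm'0] at hz
                rcases Set.mem_insert_iff.mp hz with rfl | hz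
                · exact Or.inl (by rw [hsupp_cons]; exact List.mem_cons_self)
                · exact Or.inr ⟨Cstar, hCstarCS, hz⟩
              · rw [hm's i'] at hz
                rcases hmsub i' z hz with hzq | ⟨C, hC, hzC⟩
                · exact Or.inl (by rw [hsupp_cons]; exact List.mem_cons_of_mem _ hzq)
                · exact Or.inr ⟨C, hsub hC, hzC⟩
            · intro h
              have : (⟨0, h⟩ : Fin (j + 1)) = 0 := rfl
              rw [this, hm'0]
              exact Set.mem_insert _ _
        · -- no component adjacent to v: extend branch 0 of recursive minor by v
          have hCSvempty : ∀ C ∈ CS, C ∉ CSv := by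
            intro C hC hCv
            exact hne ⟨C, hCv⟩
          rcases ih hqpath (j + 1) CS (hcond' CS (le_refl CS) hCSvempty)
            hdisj hcard with hstar | ⟨m, hmsub, hm0⟩
          · exact Or.inl hstar
          · have hk : 0 < j + 1 := Nat.succ_pos j
            have hvnot : ∀ i, v ∉ m.branch i := by
              intro i hvB
              rcases hmsub i v hvB with hzq | ⟨C, hC, hzC⟩
              · exact hvq hzq
              · exact (hCS C hC).2.1 v hzC (by rw [hsupp_cons]; exact List.mem_cons_self)
            have hconn0 : (H.induce (insert v (m.branch ⟨0, hk⟩))).Connected := by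
              refine conn_insert (hm0 hk) hvc ?_
              have := conn_of_induce_connected (m.connected ⟨0, hk⟩)
              exact this.2
            obtain ⟨m', hm'0, hm's⟩ := grow0 hk m hvnot (hm0 hk) hvc hconn0
            refine Or.inr ⟨m', ?_, fun h => by rw [hm'0]; exact Set.mem_insert _ _⟩
            intro i z hz
            by_cases hi : (0 : ℕ) < (i : ℕ)
            · rw [hm's i hi] at hz
              rcases hmsub i z hz with hzq | ⟨C, hC, hzC⟩
              · exact Or.inl (by rw [hsupp_cons]; exact List.mem_cons_of_mem _ hzq)
              · exact Or.inr ⟨C, hC, hzC⟩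
            · have : i = ⟨0, hk⟩ := Fin.ext (by simp only [Fin.val_mk]; omega)
              rw [this, hm'0] at hz
              rcases Set.mem_insert_iff.mp hz with rfl | hz
              · exact Or.inl (by rw [hsupp_cons]; exact List.mem_cons_self)
              · rcases hmsub ⟨0, hk⟩ z hz with hzq | ⟨C, hC, hzC⟩
                · exact Or.inl (by rw [hsupp_cons]; exact List.mem_cons_of_mem _ hzq)
                · exact Or.inr ⟨C, hC, hzC⟩

end StarAux
namespace StarAux

open SimpleGraph Walk

def Fthr (s : ℕ) : ℕ → ℕ
  | 0 => 1
  | j + 1 => (s + 1) * (j + 1) * Fthr s j + 2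

lemma Fthr_pos (s j : ℕ) : 1 ≤ Fthr s j := by
  cases j with
  | zero => simp [Fthr]
  | succ j => show 1 ≤ (s + 1) * (j + 1) * Fthr s j + 2; omega

variable {W : Type} {H : SimpleGraph W} {X : Set W}

lemma main (s : ℕ) (H : SimpleGraph W) (X : Set W) :
    ∀ (j : ℕ) (S : Set W) (v : W), v ∈ S →
    (∀ a ∈ S, ∃ q : H.Walk v a, ∀ z ∈ q.support, z ∈ S) →
    Fthr s j ≤ (X ∩ S).ncard →
    Nonempty (StarSubdivision H X s) ∨
      ∃ m : RootedPathMinor H X j, (∀ i, m.branch i ⊆ S) ∧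
        ∀ h : 0 < j, v ∈ m.branch ⟨0, h⟩ := by
  classical
  intro j
  induction j with
  | zero =>
    intro S v hv _ _
    exact Or.inr ⟨trivialMinor, fun i => i.elim0, fun h => absurd h (by omega)⟩
  | succ j ih =>
    intro S v hvS hreach hX
    have hFsucc : Fthr s (j + 1) = (s + 1) * (j + 1) * Fthr s j + 2 := rfl
    have hfin : (X ∩ S).Finite := by
      by_contra hinf
      rw [Set.Infinite.ncard hinf] at hX
      omega
    have hne : (X ∩ S).Nonempty := by
      rcases Set.eq_empty_or_nonempty (X ∩ S) with h | h
      · rw [h, Set.ncard_empty] at hX; omega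
      · exact h
    set D : Set ℕ :=
      {n | ∃ x', ∃ _ : x' ∈ X ∩ S, ∃ q : H.Walk v x',
        (∀ z ∈ q.support, z ∈ S) ∧ q.length = n} with hD
    have hDne : D.Nonempty := by
      obtain ⟨x0, hx0⟩ := hne
      obtain ⟨q, hq⟩ := hreach x0 hx0.2
      exact ⟨q.length, x0, hx0, q, hq, rfl⟩
    obtain ⟨x, hxXS, q0, hq0S, hq0len⟩ := Nat.sInf_mem hDne
    set p := q0.bypass with hpdef
    have hpS : ∀ z ∈ p.support, z ∈ S := fun z hz => hq0S z (q0.support_bypass_subset hz)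
    have hplen : p.length = sInf D := by
      have h1 : p.length ≤ q0.length := q0.length_bypass_le
      have h2 : sInf D ≤ p.length := Nat.sInf_le ⟨x, hxXS, p, hpS, rfl⟩
      omega
    have hppath : p.IsPath := q0.bypass_isPath
    have hNP : ∀ y ∈ p.support, y ∈ X ∩ S → y = x := by
      intro y hy hyXS
      have hlen : (p.takeUntil y hy).length + (p.dropUntil y hy).length = p.length := by
        conv_rhs => rw [← p.take_spec hy]
        rw [Walk.length_append]
      have htD : (p.takeUntil y hy).length ∈ D :=
        ⟨y, hyXS, p.takeUntil y hy,
          fun z hz => hpS z (p.support_takeUntil_subset hy hz), rfl⟩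
      have h3 : sInf D ≤ (p.takeUntil y hy).length := Nat.sInf_le htD
      have hdrop : (p.dropUntil y hy).length = 0 := by omega
      exact Walk.eq_of_length_eq_zero hdrop
    set Bs : Set W := {z | z ∈ p.support} with hBsdef
    have hvBs : v ∈ Bs := p.start_mem_support
    have hxBs : x ∈ Bs := p.end_mem_support
    set T : Set W := S \ Bs with hTdef
    set R : Set W := (X ∩ S) \ Bs with hRdef
    have hfront : ∀ y ∈ R, ∃ u ∈ Bs, ∃ w, H.Adj u w ∧ w ∈ connCompIn H T y := by
      intro y hyR
      obtain ⟨qy, hqy⟩ := hreach y hyR.1.2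
      exact exists_frontier qy.reverse
        (fun z hz => hqy z (by
          rw [Walk.support_reverse] at hz
          exact List.mem_reverse.mp hz)) hyR.2 hvBs
    have hcompwalks : ∀ y ∈ R, ∀ a ∈ connCompIn H T y, ∀ b ∈ connCompIn H T y,
        ∃ q : H.Walk a b, ∀ z ∈ q.support, z ∈ connCompIn H T y :=
      fun y hyR => connCompIn_walks ⟨hyR.1.2, hyR.2⟩
    by_cases hcase : ∃ y ∈ R, Fthr s j ≤ (X ∩ connCompIn H T y).ncard
    · obtain ⟨y, hyR, hycard⟩ := hcase
      obtain ⟨u, huBs, w, hadjuw, hwC⟩ := hfront y hyR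
      rcases ih (connCompIn H T y) w hwC
        (fun a ha => hcompwalks y hyR w hwC a ha) hycard with hstar | ⟨m, hmsub, hm0⟩
      · exact Or.inl hstar
      · have hdisjB : ∀ i, Disjoint Bs (m.branch i) := by
          intro i
          rw [Set.disjoint_left]
          intro z hz hz2
          exact (connCompIn_subset (hmsub i hz2)).2 hz
        obtain ⟨m', hm'0, hm's⟩ := prepend m Bs
          (Conn.induce_connected ⟨⟨v, hvBs⟩, walk_support_walks p⟩)
          ⟨x, hxBs, hxXS.1⟩ hdisjB
          (fun hk => ⟨u, huBs, w, hm0 hk, hadjuw⟩)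
        refine Or.inr ⟨m', ?_, ?_⟩
        · intro i
          rcases Fin.eq_zero_or_eq_succ i with rfl | ⟨i', rfl⟩
          · rw [hm'0]; exact fun z hz => hpS z hz
          · rw [hm's i']; exact fun z hz => (connCompIn_subset (hmsub i' hz)).1
        · intro h
          have h0 : (⟨0, h⟩ : Fin (j + 1)) = 0 := rfl
          rw [h0, hm'0]
          exact hvBs
    · push_neg at hcase
      have hRfin : R.Finite := hfin.subset (fun z hz => hz.1)
      set Rf := hRfin.toFinset with hRfdef
      have hsub1 : X ∩ S ⊆ insert x R := by
        intro z hz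
        by_cases hzB : z ∈ Bs
        · rw [hNP z hzB hz]; exact Set.mem_insert _ _
        · exact Set.mem_insert_of_mem _ ⟨hz, hzB⟩
      have hcount1 : Fthr s (j + 1) ≤ 1 + Rf.card := by
        calc Fthr s (j + 1) ≤ (X ∩ S).ncard := hX
          _ ≤ (insert x R).ncard := Set.ncard_le_ncard hsub1 (hRfin.insert x)
          _ ≤ 1 + R.ncard := by rw [add_comm]; exact Set.ncard_insert_le x R
          _ = 1 + Rf.card := by rw [Set.ncard_eq_toFinset_card R hRfin]
      set comp : W → Set W := fun y => connCompIn H T y with hcompdef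
      set CSf := Rf.image comp with hCSfdef
      have hfiber : ∀ A ∈ CSf, (Rf.filter (fun y' => comp y' = A)).card ≤ Fthr s j := by
        intro A hA
        obtain ⟨y, hyRf, rfl⟩ := Finset.mem_image.mp hA
        have hyR : y ∈ R := hRfin.mem_toFinset.mp hyRf
        have hsubset : ↑(Rf.filter (fun y' => comp y' = comp y)) ⊆ X ∩ comp y := by
          intro z hz
          simp only [Finset.coe_filter, Set.mem_setOf_eq] at hz
          obtain ⟨hzRf, hzc⟩ := hz
          have hzR : z ∈ R := hRfin.mem_toFinset.mp hzRf
          exact ⟨hzR.1.1, hzc ▸ mem_connCompIn_self ⟨hzR.1.2, hzR.2⟩⟩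
        have hXCfin : (X ∩ comp y).Finite :=
          hfin.subset (fun z hz => ⟨hz.1, (connCompIn_subset hz.2).1⟩)
        calc (Rf.filter (fun y' => comp y' = comp y)).card
            = (↑(Rf.filter (fun y' => comp y' = comp y)) : Set W).ncard :=
              (Set.ncard_coe_finset _).symm
          _ ≤ (X ∩ comp y).ncard := Set.ncard_le_ncard hsubset hXCfin
          _ ≤ Fthr s j := le_of_lt (hcase y hyR)
      have hcount2 : Rf.card ≤ Fthr s j * CSf.card :=
        Finset.card_le_mul_card_image Rf (Fthr s j) hfiber
      have hCScard : s * (j + 1) ≤ CSf.card := by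
        have hF1 : 1 ≤ Fthr s j := Fthr_pos s j
        have hmul : Fthr s j * (s * (j + 1)) < Fthr s j * CSf.card := by
          nlinarith
        exact le_of_lt (Nat.lt_of_mul_lt_mul_left hmul)
      have hconds : ∀ C ∈ CSf, (∃ z ∈ C, z ∈ X) ∧ (∀ z ∈ C, z ∉ p.support) ∧
          (∃ u ∈ p.support, ∃ w ∈ C, H.Adj u w) ∧
          (∀ a ∈ C, ∀ b ∈ C, ∃ q : H.Walk a b, ∀ z ∈ q.support, z ∈ C) := by
        intro C hC
        obtain ⟨y, hyRf, rfl⟩ := Finset.mem_image.mp hC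
        have hyR : y ∈ R := hRfin.mem_toFinset.mp hyRf
        obtain ⟨u, huBs, w, hadjuw, hwC⟩ := hfront y hyR
        refine ⟨⟨y, mem_connCompIn_self ⟨hyR.1.2, hyR.2⟩, hyR.1.1⟩, ?_, ?_, hcompwalks y hyR⟩
        · intro z hz hz2
          exact (connCompIn_subset hz).2 hz2
        · exact ⟨u, huBs, w, hwC, hadjuw⟩
      have hpairdisj : ∀ C ∈ CSf, ∀ C' ∈ CSf, C ≠ C' → Disjoint C C' := by
        intro C hC C' hC' hne'
        obtain ⟨y, _, rfl⟩ := Finset.mem_image.mp hC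
        obtain ⟨y', _, rfl⟩ := Finset.mem_image.mp hC'
        exact connCompIn_disjoint hne'
      rcases caterpillar s p hppath (j + 1) CSf hconds hpairdisj hCScard with
        hstar | ⟨m, hmsub, hm0⟩
      · exact Or.inl hstar
      · refine Or.inr ⟨m, ?_, hm0⟩
        intro i z hz
        rcases hmsub i z hz with hzp | ⟨C, hC, hzC⟩
        · exact hpS z hzp
        · obtain ⟨y, _, rfl⟩ := Finset.mem_image.mp hC
          exact (connCompIn_subset hzC).1

end StarAux

/-- rooted Ramsey-type lemma: a large enough rooted set in a connected graph
yields a subdivided star with leaves in `X` or an `X`-rooted path minor. -/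
theorem star_or_rooted_path :
    ∃ f : ℕ → ℕ, ∀ (W : Type) (H : SimpleGraph W) (X : Set W) (s : ℕ),
      H.Connected → f s ≤ X.ncard →
      Nonempty (StarSubdivision H X s) ∨ Nonempty (RootedPathMinor H X s) := by
  classical
  refine ⟨fun s => StarAux.Fthr s s, ?_⟩
  intro W H X s hconn hX
  obtain ⟨v⟩ := hconn.nonempty
  have hreach : ∀ a ∈ (Set.univ : Set W), ∃ q : H.Walk v a,
      ∀ z ∈ q.support, z ∈ (Set.univ : Set W) := by
    intro a _
    obtain ⟨q⟩ := hconn.preconnected v a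
    exact ⟨q, fun z _ => trivial⟩
  have hX' : StarAux.Fthr s s ≤ (X ∩ Set.univ).ncard := by rwa [Set.inter_univ]
  rcases StarAux.main s H X s Set.univ v trivial hreach hX' with hstar | ⟨m, _, _⟩
  · exact Or.inl hstar
  · exact Or.inr ⟨m⟩
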